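/- Let L be a finite join-semidistributive lattice and let j be a join-irreducible element of L such that K(j) has no greatest element. Let B be a nonempty antichain in 𝒜_j with ⋁B ∨ j = ⋁B ∨ j_* that is minimal in join-refinement among all such antichains (i.e., every nonempty antichain B' ∈ 𝒜_j with ⋁B' ∨ j = ⋁B' ∨ j_* that join-refines B equals B). Then for each b ∈ B, the set (B \ {b}) ∪ {j} is the canonical join representation of ⋁(B \ {b}) ∨ j. -/

import Mathlib

universe u v

def JoinSemidistrib (α : Type*) [Lattice α] : Prop :=
  ∀ x y z : α, x ⊔ y = x ⊔ z → x ⊔ (y ⊓ z) = x ⊔ y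

def MeetSemidistrib (α : Type*) [Lattice α] : Prop :=
  ∀ x y z : α, x ⊓ y = x ⊓ z → x ⊓ (y ⊔ z) = x ⊓ y

section JoinDefs

variable {α : Type*} [Lattice α] [OrderBot α]

/-- `j` is join-irreducible: not the bottom element, and `j = a ⊔ b` implies `j = a` or `j = b`. -/
def JoinIrred (j : α) : Prop :=
  j ≠ ⊥ ∧ ∀ a b : α, j = a ⊔ b → j = a ∨ j = b

/-- `A` join-refines `B`: every element of `A` is below some element of `B`. -/
def JoinRefines (A B : Finset α) : Prop :=
  ∀ a ∈ A, ∃ b ∈ B, a ≤ b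

/-- `A` is an irredundant join representation of `w`. -/
def IrredJoinRep (A : Finset α) (w : α) : Prop :=
  A.sup id = w ∧ ∀ A' ⊂ A, A'.sup id < w

/-- `A` is the canonical join representation of `w`: the irredundant join representation
of `w` that join-refines every irredundant join representation of `w`. -/
def CanonicalJoinRep (A : Finset α) (w : α) : Prop :=
  IrredJoinRep A w ∧ ∀ B : Finset α, IrredJoinRep B w → JoinRefines A B

/-- `A` joins canonically, i.e. `A` is a face of the canonical join complex. -/
def JoinsCanonically (A : Finset α) : Prop :=
  CanonicalJoinRep A (A.sup id)

/-- `j` is a canonical joinand of `w`. -/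
def CanonicalJoinand (j w : α) : Prop :=
  ∃ A : Finset α, CanonicalJoinRep A w ∧ j ∈ A

end JoinDefs

/-- The canonical join complex is flag: any finite set of join-irreducible elements all of
whose two-element subsets are faces is itself a face. -/
def FlagCanonicalJoinComplex (α : Type*) [Lattice α] [OrderBot α] [DecidableEq α] : Prop :=
  ∀ F : Finset α, (∀ j ∈ F, JoinIrred j) →
    (∀ j ∈ F, ∀ j' ∈ F, j ≠ j' → JoinsCanonically ({j, j'} : Finset α)) →
    JoinsCanonically F

/-- A lattice is crosscut-simplicial if for every `x ≤ y` and every proper subset `S` of the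
set of atoms of the interval `[x, y]` (elements `a` with `x ⋖ a` and `a ≤ y`), the join of `x`
with all elements of `S` is strictly less than `y`. -/
def CrosscutSimplicial (β : Type*) [Lattice β] : Prop :=
  ∀ x y : β, x ≤ y → ∀ S : Finset β,
    (∀ a ∈ S, x ⋖ a ∧ a ≤ y) →
    (∃ a : β, (x ⋖ a ∧ a ≤ y) ∧ a ∉ S) →
    S.fold (· ⊔ · : β → β → β) x id < y

section MeetDefs

variable {α : Type*} [Lattice α] [OrderTop α]

/-- `m` is meet-irreducible: not the top element, and `m = a ⊓ b` implies `m = a` or `m = b`. -/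
def MeetIrred (m : α) : Prop :=
  m ≠ ⊤ ∧ ∀ a b : α, m = a ⊓ b → m = a ∨ m = b

/-- `A` meet-refines `B`: every element of `A` is above some element of `B`. -/
def MeetRefines (A B : Finset α) : Prop :=
  ∀ a ∈ A, ∃ b ∈ B, b ≤ a

/-- `A` is an irredundant meet representation of `w`. -/
def IrredMeetRep (A : Finset α) (w : α) : Prop :=
  A.inf id = w ∧ ∀ A' ⊂ A, w < A'.inf id

/-- `A` is the canonical meet representation of `w`. -/
def CanonicalMeetRep (A : Finset α) (w : α) : Prop :=
  IrredMeetRep A w ∧ ∀ B : Finset α, IrredMeetRep B w → MeetRefines A B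

/-- `A` meets canonically, i.e. `A` is a face of the canonical meet complex. -/
def MeetsCanonically (A : Finset α) : Prop :=
  CanonicalMeetRep A (A.inf id)

end MeetDefs

/-- The canonical meet complex is flag. -/
def FlagCanonicalMeetComplex (α : Type*) [Lattice α] [OrderTop α] [DecidableEq α] : Prop :=
  ∀ F : Finset α, (∀ m ∈ F, MeetIrred m) →
    (∀ m ∈ F, ∀ m' ∈ F, m ≠ m' → MeetsCanonically ({m, m'} : Finset α)) →
    MeetsCanonically F



section AuxLemmas

variable {α : Type*} [Lattice α] [OrderBot α] [Fintype α] [DecidableEq α]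

/-- n-ary join-semidistributivity. -/
lemma jsd_sup_inf (hjsd : JoinSemidistrib α) (x w : α) :
    ∀ (M : Finset α) (hne : M.Nonempty), (∀ m ∈ M, x ⊔ m = w) → x ⊔ M.inf' hne id = w := by
  intro M hne
  induction hne using Finset.Nonempty.cons_induction with
  | singleton a => intro hm; simpa using hm a (by simp)
  | cons a s ha hs ih =>
    intro hm
    have h1 : x ⊔ a = w := hm a (by simp)
    have h2 := ih (fun m hm' => hm m (Finset.mem_cons.mpr (Or.inr hm')))
    rw [Finset.inf'_cons (H := hs)]
    have := hjsd x a (s.inf' hs id) (h1.trans h2.symm)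
    calc x ⊔ (id a ⊓ s.inf' hs id) = x ⊔ a := this
      _ = w := h1

/-- Extract the antichain of maximal elements of a finite set. -/
lemma exists_antichain_max (S : Finset α) :
    ∃ T ⊆ S, T.sup id = S.sup id ∧ IsAntichain (· ≤ ·) (↑T : Set α) ∧
      ∀ s ∈ S, ∃ t ∈ T, s ≤ t := by
  classical
  have hcov : ∀ s ∈ S, ∃ t ∈ S.filter (fun a => ∀ b ∈ S, a ≤ b → a = b), s ≤ t := by
    intro s hs
    obtain ⟨m, hm, hmax⟩ : ∃ m ∈ S.filter (fun b => s ≤ b), ∀ x ∈ S.filter (fun b => s ≤ b), ¬ m < x := by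
      obtain ⟨m, hm1, hm2⟩ := Finset.exists_maximal (s := S.filter (fun b => s ≤ b)) ⟨s, Finset.mem_filter.mpr ⟨hs, le_rfl⟩⟩
      exact ⟨m, hm1, fun x hx hlt => hlt.not_ge (hm2 hx hlt.le)⟩
    have hm' := Finset.mem_filter.mp hm
    refine ⟨m, Finset.mem_filter.mpr ⟨hm'.1, ?_⟩, hm'.2⟩
    intro b hb hmb
    by_contra hne
    exact hmax b (Finset.mem_filter.mpr ⟨hb, hm'.2.trans hmb⟩) (lt_of_le_of_ne hmb hne)
  refine ⟨S.filter (fun a => ∀ b ∈ S, a ≤ b → a = b), Finset.filter_subset _ _, ?_, ?_, hcov⟩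
  · refine le_antisymm (Finset.sup_mono (Finset.filter_subset _ _)) (Finset.sup_le fun s hs => ?_)
    obtain ⟨t, ht, hst⟩ := hcov s hs
    exact le_trans hst (Finset.le_sup (f := id) ht)
  · intro x hx y hy hxy hle
    have hx' := Finset.mem_filter.mp hx
    exact hxy (hx'.2 y (Finset.mem_filter.mp hy).1 hle)

/-- Every element strictly below w is below a lower cover of w. -/
lemma exists_le_covBy {s w : α} (h : s < w) : ∃ y, s ≤ y ∧ y ⋖ w := by
  classical
  obtain ⟨m, hm, hmax⟩ : ∃ m ∈ Finset.univ.filter (fun z => s ≤ z ∧ z < w),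
      ∀ x ∈ Finset.univ.filter (fun z => s ≤ z ∧ z < w), ¬ m < x := by
    obtain ⟨m, hm1, hm2⟩ := Finset.exists_maximal
      (s := Finset.univ.filter (fun z => s ≤ z ∧ z < w)) ⟨s, by simp [h]⟩
    exact ⟨m, hm1, fun x hx hlt => hlt.not_ge (hm2 hx hlt.le)⟩
  have hm' := (Finset.mem_filter.mp hm).2
  refine ⟨m, hm'.1, hm'.2, ?_⟩
  intro c hmc hcw
  exact hmax c (by simp [hm'.1.trans hmc.le, hcw]) hmc

/-- Existence of the canonical join representation in a finite JSD lattice. -/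
lemma exists_cjr (hjsd : JoinSemidistrib α) (w : α) :
    ∃ C : Finset α, C.sup id = w ∧ IsAntichain (· ≤ ·) (↑C : Set α) ∧
      (∀ C' ⊂ C, C'.sup id < w) ∧
      ∀ V : Finset α, V.sup id = w → JoinRefines C V := by
  classical
  set eta : α → α := fun y =>
    if h : (Finset.univ.filter (fun x => y ⊔ x = w)).Nonempty
    then (Finset.univ.filter (fun x => y ⊔ x = w)).inf' h id else w with heta
  have hetaspec : ∀ y, y ≤ w → y ⊔ eta y = w ∧ ∀ v, y ⊔ v = w → eta y ≤ v := by
    intro y hyw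
    have hne : (Finset.univ.filter (fun x => y ⊔ x = w)).Nonempty :=
      ⟨w, by simp [sup_eq_right.mpr hyw]⟩
    have hval : eta y = (Finset.univ.filter (fun x => y ⊔ x = w)).inf' hne id := by
      simp only [heta, dif_pos hne]
    constructor
    · rw [hval]
      exact jsd_sup_inf hjsd y w _ hne (fun m hm => (Finset.mem_filter.mp hm).2)
    · intro v hv
      rw [hval]
      exact Finset.inf'_le id (by simp [hv])
  have heta_sup : ∀ y, y ⋖ w → y ⊔ eta y = w := fun y hy => (hetaspec y hy.le).1
  have heta_min : ∀ y v, y ⊔ v = w → eta y ≤ v := by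
    intro y v hv
    have hyw : y ≤ w := hv ▸ le_sup_left
    exact (hetaspec y hyw).2 v hv
  set S : Finset α := (Finset.univ.filter (fun y => y ⋖ w)).image eta with hS
  obtain ⟨C, hCS, hCsup, hCanti, hCcov⟩ := exists_antichain_max S
  have hSle : S.sup id ≤ w := by
    refine Finset.sup_le (fun c hc => ?_)
    obtain ⟨y, hy, rfl⟩ := Finset.mem_image.mp hc
    have hy' := (Finset.mem_filter.mp hy).2
    exact le_trans (heta_min y w (sup_eq_right.mpr hy'.le)) le_rfl
  have hSsup : S.sup id = w := by
    rcases eq_or_lt_of_le hSle with h | h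
    · exact h
    · exfalso
      obtain ⟨y, hy1, hy2⟩ := exists_le_covBy h
      have hmem : eta y ∈ S := Finset.mem_image.mpr ⟨y, by simp [hy2], rfl⟩
      have : eta y ≤ y := le_trans (Finset.le_sup (f := id) hmem) hy1
      have := heta_sup y hy2
      rw [sup_eq_left.mpr ‹eta y ≤ y›] at this
      exact absurd this hy2.lt.ne
  have hCw : C.sup id = w := hCsup.trans hSsup
  have href : ∀ V : Finset α, V.sup id = w → JoinRefines C V := by
    intro V hV c hc
    obtain ⟨y, hy, rfl⟩ := Finset.mem_image.mp (hCS hc)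
    have hy' : y ⋖ w := (Finset.mem_filter.mp hy).2
    have hVy : ¬ V.sup id ≤ y := fun hle => hy'.lt.ne (le_antisymm hy'.lt.le (hV ▸ hle))
    have : ∃ v ∈ V, ¬ v ≤ y := by
      by_contra hno
      push_neg at hno
      exact hVy (Finset.sup_le hno)
    obtain ⟨v, hv, hvy⟩ := this
    have hyv : y ⊔ v = w := by
      rcases hy'.eq_or_eq (le_sup_left : y ≤ y ⊔ v) (sup_le hy'.lt.le (hV ▸ Finset.le_sup (f := id) hv)) with h | h
      · exact absurd (sup_eq_left.mp h) hvy
      · exact h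
    exact ⟨v, hv, heta_min y v hyv⟩
  refine ⟨C, hCw, hCanti, ?_, href⟩
  intro C' hC'
  obtain ⟨hC'sub, hC'ne⟩ := Finset.ssubset_def.mp hC'
  have hle : C'.sup id ≤ w := (Finset.sup_mono hC'sub).trans hCw.le
  rcases eq_or_lt_of_le hle with h | h
  · exfalso
    have hsub : C ⊆ C' := by
      intro c hc
      obtain ⟨v, hv, hcv⟩ := href C' h c hc
      rcases eq_or_ne c v with rfl | hne
      · exact hv
      · exact absurd hcv (hCanti (Finset.mem_coe.mpr hc) (Finset.mem_coe.mpr (hC'sub hv)) hne)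
    exact hC'ne hsub
  · exact h

end AuxLemmas

/-- Lemma (refinement-minimal): if `B` is a nonempty antichain in `𝒜_j` with
`⋁B ⊔ j = ⋁B ⊔ j_*`, minimal in join-refinement among all such antichains, then for each
`b ∈ B` the set `(B \ {b}) ∪ {j}` is the canonical join representation of `⋁(B \ {b}) ⊔ j`. -/
theorem stmt_12 {α : Type*} [Lattice α] [OrderBot α] [Fintype α] [DecidableEq α]
    (hjsd : JoinSemidistrib α) (j jstar : α) (hj : JoinIrred j) (hstar : jstar ⋖ j)
    (hk : ¬ ∃ m : α, IsGreatest {a : α | jstar ≤ a ∧ ¬ j ≤ a} m)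
    (B : Finset α) (hBne : B.Nonempty) (hjB : j ∉ B)
    (hBanti : IsAntichain (· ≤ ·) (↑B : Set α))
    (hBjanti : IsAntichain (· ≤ ·) (insert j (↑B : Set α)))
    (hBeq : B.sup id ⊔ j = B.sup id ⊔ jstar)
    (hmin : ∀ B' : Finset α, B'.Nonempty → j ∉ B' →
      IsAntichain (· ≤ ·) (↑B' : Set α) →
      IsAntichain (· ≤ ·) (insert j (↑B' : Set α)) →
      B'.sup id ⊔ j = B'.sup id ⊔ jstar → JoinRefines B' B → B' = B) :
    ∀ b ∈ B, CanonicalJoinRep (insert j (B.erase b)) ((B.erase b).sup id ⊔ j) := by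
  classical
  -- any element strictly below j is below jstar
  have hlow : ∀ c : α, c < j → c ≤ jstar := by
    intro c hc
    have h1 : c ⊔ jstar ≤ j := sup_le hc.le hstar.le
    rcases eq_or_lt_of_le h1 with h | h
    · rcases hj.2 c jstar h.symm with h' | h'
      · exact absurd h'.symm hc.ne
      · exact absurd h'.symm hstar.lt.ne
    · have : c ⊔ jstar = jstar := by
        rcases hstar.eq_or_eq (le_sup_right : jstar ≤ c ⊔ jstar) h.le with h' | h'
        · exact h'
        · exact absurd h' h.ne
      exact le_trans le_sup_left this.le
  have hjBs : j ≤ B.sup id ⊔ jstar := by rw [← hBeq]; exact le_sup_right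
  -- consequence of refinement-minimality of B
  have key : ∀ X : Finset α, X.Nonempty → X ⊆ B → X ≠ B → ¬ j ≤ X.sup id ⊔ jstar := by
    intro X hXne hXB hXneB hle
    have hXBc : (↑X : Set α) ⊆ (↑B : Set α) := Finset.coe_subset.mpr hXB
    have heq : X.sup id ⊔ j = X.sup id ⊔ jstar :=
      le_antisymm (sup_le le_sup_left hle) (sup_le_sup_left hstar.le _)
    exact hXneB (hmin X hXne (fun hjX => hjB (hXB hjX)) (hBanti.subset hXBc)
      (hBjanti.subset (Set.insert_subset_insert hXBc)) heq
      (fun x hx => ⟨x, hXB hx, le_rfl⟩))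
  intro b hb
  set A := B.erase b with hA
  have hAB : A ⊆ B := Finset.erase_subset _ _
  have hAneB : A ≠ B := fun h => (Finset.notMem_erase b B) (by rw [← hA, h]; exact hb)
  obtain ⟨C, hCsup, hCanti, hCirr, hCref⟩ := exists_cjr hjsd (A.sup id ⊔ j)
  set w := A.sup id ⊔ j with hw
  have hrep : (insert j A).sup id = w := by
    rw [Finset.sup_insert]; exact sup_comm _ _
  have hrefA : ∀ c ∈ C, ∃ d ∈ insert j A, c ≤ d := hCref _ hrep
  -- j is an element of C
  have hjC : j ∈ C := by
    have hex : ∃ c ∈ C, j ≤ c := by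
      by_contra hno
      push_neg at hno
      have hCle : ∀ c ∈ C, c ≤ A.sup id ⊔ jstar := by
        intro c hc
        obtain ⟨d, hd, hcd⟩ := hrefA c hc
        rcases Finset.mem_insert.mp hd with rfl | hdA
        · have : c < d := lt_of_le_of_ne hcd (fun h => hno c hc (h ▸ le_rfl))
          exact le_trans (hlow c this) le_sup_right
        · exact le_trans (le_trans hcd (Finset.le_sup (f := id) hdA)) le_sup_left
      have hjle : j ≤ A.sup id ⊔ jstar := by
        have hwle : w ≤ A.sup id ⊔ jstar := hCsup ▸ Finset.sup_le hCle
        exact le_trans le_sup_right hwle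
      rcases A.eq_empty_or_nonempty with hAe | hAne
      · rw [hAe] at hjle
        simp only [Finset.sup_empty, bot_sup_eq] at hjle
        exact absurd hjle (not_le_of_gt hstar.lt)
      · exact key A hAne hAB hAneB hjle
    obtain ⟨c₀, hc₀C, hjc₀⟩ := hex
    obtain ⟨d, hd, hcd⟩ := hrefA c₀ hc₀C
    rcases Finset.mem_insert.mp hd with rfl | hdA
    · exact (le_antisymm hcd hjc₀) ▸ hc₀C
    · exfalso
      have hdB : d ∈ B := Finset.mem_of_mem_erase hdA
      exact hBjanti (Set.mem_insert j _) (Set.mem_insert_of_mem _ (Finset.mem_coe.mpr hdB))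
        (fun h => hjB (h ▸ hdB)) (le_trans hjc₀ hcd)
  -- every element of A is in C
  have hAC : ∀ a ∈ A, a ∈ C := by
    intro a ha
    have hAne : A.Nonempty := ⟨a, ha⟩
    set C' := C.erase j with hC'
    have hC'sup : j ⊔ C'.sup id = w := by
      have h' : (insert j C').sup id = id j ⊔ C'.sup id := Finset.sup_insert
      rw [Finset.insert_erase hjC] at h'
      simpa using h'.symm.trans hCsup
    have hC'ref : ∀ c ∈ C', ∃ d ∈ A, c ≤ d := by
      intro c hc
      obtain ⟨d, hd, hcd⟩ := hrefA c (Finset.mem_of_mem_erase hc)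
      rcases Finset.mem_insert.mp hd with rfl | hdA
      · exfalso
        exact hCanti (Finset.mem_coe.mpr (Finset.mem_of_mem_erase hc)) (Finset.mem_coe.mpr hjC)
          (Finset.ne_of_mem_erase hc) hcd
      · exact ⟨d, hdA, hcd⟩
    have hjA : ¬ j ≤ A.sup id := fun h =>
      key A hAne hAB hAneB (le_trans h le_sup_left)
    set z := C'.sup id ⊔ b ⊔ jstar with hz
    have hBsup : B.sup id = b ⊔ A.sup id := by
      conv_lhs => rw [← Finset.insert_erase hb]
      rw [Finset.sup_insert]; rfl
    have h1 : j ≤ z ⊔ A.sup id := by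
      refine le_trans hjBs ?_
      rw [hBsup]
      refine sup_le (sup_le ?_ le_sup_right) ?_
      · exact le_trans (le_sup_right : b ≤ C'.sup id ⊔ b) (le_trans le_sup_left le_sup_left)
      · exact le_trans (le_sup_right : jstar ≤ C'.sup id ⊔ b ⊔ jstar) le_sup_left
    have h2 : z ⊔ j = z ⊔ A.sup id := by
      refine le_antisymm (sup_le le_sup_left h1) (sup_le le_sup_left ?_)
      have hAw : A.sup id ≤ w := le_sup_left
      have : w ≤ j ⊔ z := by
        rw [← hC'sup]
        exact sup_le le_sup_left (le_trans (le_trans le_sup_left le_sup_left : C'.sup id ≤ z) le_sup_right)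
      exact le_trans hAw (le_trans this (sup_comm j z ▸ le_rfl))
    have h3 : j ⊓ A.sup id ≤ jstar := by
      refine hlow _ (lt_of_le_of_ne inf_le_left (fun h => hjA (h ▸ inf_le_right)))
    have h4 : j ≤ z := by
      have hjsd' := hjsd z j (A.sup id) h2
      have : z ⊔ j ≤ z := by
        rw [← hjsd']
        exact sup_le le_rfl (le_trans h3 (le_sup_right : jstar ≤ z))
      exact le_trans le_sup_right this
    -- the antichain of maximal elements of C' ∪ {b}
    obtain ⟨Y, hYsub, hYsup, hYanti, hYcov⟩ := exists_antichain_max (insert b C')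
    have hYne : Y.Nonempty := by
      obtain ⟨t, ht, _⟩ := hYcov b (Finset.mem_insert_self b C')
      exact ⟨t, ht⟩
    have hjb : j ≠ b := fun h => hjB (h ▸ hb)
    have hjY : j ∉ Y := by
      intro h
      rcases Finset.mem_insert.mp (hYsub h) with h' | h'
      · exact hjb h'
      · exact (Finset.notMem_erase j C) h'
    have hYmem : ∀ y ∈ Y, y = b ∨ y ∈ C' := fun y hy => Finset.mem_insert.mp (hYsub hy)
    have hincomp : ∀ y ∈ Y, ¬ j ≤ y ∧ ¬ y ≤ j := by
      intro y hy
      rcases hYmem y hy with rfl | hyC'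
      · exact ⟨hBjanti (Set.mem_insert j _) (Set.mem_insert_of_mem _ (Finset.mem_coe.mpr hb)) hjb,
          hBjanti (Set.mem_insert_of_mem _ (Finset.mem_coe.mpr hb)) (Set.mem_insert j _) (Ne.symm hjb)⟩
      · have hyC : y ∈ C := Finset.mem_of_mem_erase hyC'
        have hyj : y ≠ j := Finset.ne_of_mem_erase hyC'
        exact ⟨hCanti (Finset.mem_coe.mpr hjC) (Finset.mem_coe.mpr hyC) (Ne.symm hyj),
          hCanti (Finset.mem_coe.mpr hyC) (Finset.mem_coe.mpr hjC) hyj⟩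
    have hYjanti : IsAntichain (· ≤ ·) (insert j (↑Y : Set α)) := by
      intro x hx y hy hxy hle
      rcases Set.mem_insert_iff.mp hx with rfl | hx' <;>
        rcases Set.mem_insert_iff.mp hy with h | hy'
      · exact hxy h.symm
      · exact (hincomp y hy').1 hle
      · exact (hincomp x hx').2 (h ▸ hle)
      · exact hYanti hx' hy' hxy hle
    have hYsupz : Y.sup id ⊔ jstar = z := by
      rw [hYsup, Finset.sup_insert]
      show (id b ⊔ C'.sup id) ⊔ jstar = C'.sup id ⊔ b ⊔ jstar
      rw [sup_comm (id b) (C'.sup id)]; rfl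
    have hYeq : Y.sup id ⊔ j = Y.sup id ⊔ jstar := by
      have hjz : j ≤ Y.sup id ⊔ jstar := hYsupz ▸ h4
      exact le_antisymm (sup_le le_sup_left hjz) (sup_le_sup_left hstar.le _)
    have hYref : JoinRefines Y B := by
      intro y hy
      rcases hYmem y hy with hyb | hyC'
      · exact ⟨b, hb, hyb.le⟩
      · obtain ⟨d, hdA, hyd⟩ := hC'ref y hyC'
        exact ⟨d, hAB hdA, hyd⟩
    have hYB : Y = B := hmin Y hYne hjY hYanti hYjanti hYeq hYref
    -- conclude a ∈ C
    have haB : a ∈ B := hAB ha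
    have haY : a ∈ Y := hYB.symm ▸ haB
    rcases Finset.mem_insert.mp (hYsub haY) with h | h
    · exact absurd h (Finset.ne_of_mem_erase ha)
    · exact Finset.mem_of_mem_erase h
  -- final identification
  have hjAC : insert j A ⊆ C := by
    intro d hd
    rcases Finset.mem_insert.mp hd with rfl | hdA
    · exact hjC
    · exact hAC d hdA
  have hCjA : C ⊆ insert j A := by
    intro c hc
    obtain ⟨d, hd, hcd⟩ := hrefA c hc
    rcases eq_or_ne c d with rfl | hne
    · exact hd
    · exact absurd hcd (hCanti (Finset.mem_coe.mpr hc) (Finset.mem_coe.mpr (hjAC hd)) hne)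
  have hCeq : insert j A = C := Finset.Subset.antisymm hjAC hCjA
  rw [hCeq]
  refine ⟨⟨hCsup, hCirr⟩, ?_⟩
  intro V hV
  exact hCref V hV.1
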